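/- Let A ⊆ {-1,1}^n with density α = |A|/2^n, and let k ≤ 2 ln(1/α). Then the level-k Fourier weight of the indicator function satisfies ∑_{|S|=k} (1̂_A(S))² ≤ α² · ((2e/k) · ln(1/α))^k. -/

import Mathlib

/-- The Fourier coefficient `f̂(S)` of a function on the Boolean cube
`{-1,1}^n`, encoded as `(Fin n → Bool) → ℝ` where `true` stands for `-1`. -/
noncomputable def booleanFourierCoeff {n : ℕ} (f : (Fin n → Bool) → ℝ)
    (S : Finset (Fin n)) : ℝ :=
  (∑ x : Fin n → Bool, f x * ∏ i ∈ S, (if x i then (-1 : ℝ) else 1)) / 2 ^ n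



open Finset



noncomputable def chi {n : ℕ} (x : Fin n → Bool) (S : Finset (Fin n)) : ℝ :=
  ∏ i ∈ S, (if x i then (-1 : ℝ) else 1)

lemma chi_sq {n : ℕ} (x : Fin n → Bool) (S : Finset (Fin n)) : chi x S ^ 2 = 1 := by
  rw [chi, ← Finset.prod_pow]
  apply Finset.prod_eq_one
  intro i _
  by_cases h : x i <;> simp [h]

lemma chi_abs_le {n : ℕ} (x : Fin n → Bool) (S : Finset (Fin n)) : |chi x S| ≤ 1 := by
  have := chi_sq x S
  nlinarith [abs_nonneg (chi x S), sq_abs (chi x S)]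

lemma sum_chi_mul_chi {n : ℕ} (S T : Finset (Fin n)) (hST : S ≠ T) :
    ∑ x : Fin n → Bool, chi x S * chi x T = 0 := by
  have key : ∀ x : Fin n → Bool, chi x S * chi x T =
      ∏ i : Fin n, ((if i ∈ S then (if x i then (-1:ℝ) else 1) else 1) *
        (if i ∈ T then (if x i then (-1:ℝ) else 1) else 1)) := by
    intro x
    rw [Finset.prod_mul_distrib, chi, chi, Finset.prod_ite_mem, Finset.prod_ite_mem]
    simp [Finset.univ_inter]
  simp_rw [key]
  rw [← Fintype.piFinset_univ,
    ← Finset.prod_univ_sum (fun _ : Fin n => (Finset.univ : Finset Bool))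
      (fun i b => (if i ∈ S then (if b then (-1:ℝ) else 1) else 1) *
        (if i ∈ T then (if b then (-1:ℝ) else 1) else 1))]
  -- now a product over i of (sum over b : Bool)
  obtain ⟨i, hi⟩ : ∃ i, (i ∈ S ∧ i ∉ T) ∨ (i ∈ T ∧ i ∉ S) := by
    by_contra h
    push_neg at h
    apply hST
    ext j
    have := h j
    tauto
  apply Finset.prod_eq_zero (Finset.mem_univ i)
  rcases hi with ⟨h1, h2⟩ | ⟨h1, h2⟩ <;> simp [h1, h2, Fintype.sum_bool]




lemma card_cube (n : ℕ) : (Fintype.card (Fin n → Bool)) = 2 ^ n := by simp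

lemma parseval_combo {n : ℕ} (c : Finset (Fin n) → ℝ) :
    ∑ x : Fin n → Bool, (∑ S : Finset (Fin n), c S * chi x S) ^ 2
      = 2 ^ n * ∑ S : Finset (Fin n), (c S) ^ 2 := by
  have expand : ∀ x : Fin n → Bool, (∑ S : Finset (Fin n), c S * chi x S) ^ 2 =
      ∑ S : Finset (Fin n), ∑ T : Finset (Fin n), (c S * c T) * (chi x S * chi x T) := by
    intro x
    rw [sq, Finset.sum_mul_sum]
    apply Finset.sum_congr rfl; intro S _
    apply Finset.sum_congr rfl; intro T _
    ring
  simp_rw [expand]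
  rw [Finset.sum_comm]
  have : ∀ S : Finset (Fin n),
      (∑ x : Fin n → Bool, ∑ T : Finset (Fin n), (c S * c T) * (chi x S * chi x T))
        = 2 ^ n * (c S) ^ 2 := by
    intro S
    rw [Finset.sum_comm]
    rw [Finset.sum_eq_single S]
    · rw [← Finset.mul_sum]
      have : ∀ x : Fin n → Bool, chi x S * chi x S = 1 := by
        intro x; have := chi_sq x S; nlinarith
      simp_rw [this]
      simp [card_cube, mul_comm]
      ring
    · intro T _ hT
      rw [← Finset.mul_sum, sum_chi_mul_chi S T (Ne.symm hT), mul_zero]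
    · intro h; exact absurd (Finset.mem_univ S) h
  simp_rw [this]
  rw [← Finset.mul_sum]


-- sum over even indices
lemma sum_even_reindex (G : ℕ → ℝ) (m : ℕ) :
    ∑ i ∈ Finset.range (2 * m + 1), (if Even i then G i else 0)
      = ∑ j ∈ Finset.range (m + 1), G (2 * j) := by
  induction m with
  | zero => simp
  | succ m ih =>
    have h1 : 2 * (m + 1) + 1 = (2 * m + 1) + 1 + 1 := by ring
    rw [h1, Finset.sum_range_succ, Finset.sum_range_succ, ih, Finset.sum_range_succ]
    have hodd : ¬ Even (2 * m + 1) := by simp [Nat.even_add_one, Nat.even_mul]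
    have heven : Even (2 * m + 1 + 1) := by exact ⟨m + 1, by ring⟩
    rw [if_neg hodd, if_pos heven, Finset.sum_range_succ]
    have : 2 * m + 1 + 1 = 2 * (m + 1) := by ring
    rw [this, Finset.sum_range_succ]
    ring

-- binomial even-part identity
lemma even_binomial (u v : ℝ) (m : ℕ) :
    (v + u) ^ (2 * m) + (v - u) ^ (2 * m)
      = 2 * ∑ j ∈ Finset.range (m + 1),
          (Nat.choose (2 * m) (2 * j) : ℝ) * u ^ (2 * j) * v ^ (2 * m - 2 * j) := by
  have h1 : (v + u) ^ (2 * m) = (u + v) ^ (2 * m) := by ring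
  have h2 : (v - u) ^ (2 * m) = (-u + v) ^ (2 * m) := by ring
  rw [h1, h2, add_pow, add_pow]
  rw [← Finset.sum_add_distrib]
  have : ∀ i ∈ Finset.range (2 * m + 1),
      u ^ i * v ^ (2 * m - i) * (Nat.choose (2 * m) i : ℝ)
        + (-u) ^ i * v ^ (2 * m - i) * (Nat.choose (2 * m) i : ℝ)
      = if Even i then 2 * ((Nat.choose (2 * m) i : ℝ) * u ^ i * v ^ (2 * m - i)) else 0 := by
    intro i _
    by_cases h : Even i
    · rw [if_pos h, h.neg_pow]; ring
    · rw [if_neg h, (Nat.not_even_iff_odd.mp h).neg_pow]; ring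
  rw [Finset.sum_congr rfl this,
    sum_even_reindex (fun i => 2 * ((Nat.choose (2 * m) i : ℝ) * u ^ i * v ^ (2 * m - i))) m,
    Finset.mul_sum]

-- choose inequality
lemma choose_le (m j : ℕ) (hj : j ≤ m) :
    Nat.choose (2 * m) (2 * j) ≤ Nat.choose m j * (2 * m - 1) ^ j := by
  induction j with
  | zero => simp
  | succ j ih =>
    have hjm : j + 1 ≤ m := hj
    have hj' : j ≤ m := le_trans (Nat.le_succ j) hj
    have ihj := ih hj'
    -- cross-multiplied identities
    have e1 : Nat.choose (2*m) (2*j+1) * (2*j+1) = Nat.choose (2*m) (2*j) * (2*m - 2*j) :=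
      Nat.choose_succ_right_eq (2*m) (2*j)
    have e2 : Nat.choose (2*m) (2*j+2) * (2*j+2) = Nat.choose (2*m) (2*j+1) * (2*m - (2*j+1)) :=
      Nat.choose_succ_right_eq (2*m) (2*j+1)
    have e3 : Nat.choose m (j+1) * (j+1) = Nat.choose m j * (m - j) :=
      Nat.choose_succ_right_eq m j
    -- show target * ((2j+1)*(2j+2)) ≤ ...
    have key : Nat.choose (2*m) (2*j+2) * ((2*j+1) * (2*j+2))
        ≤ (Nat.choose m (j+1) * (2*m-1)^(j+1)) * ((2*j+1) * (2*j+2)) := by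
      have lhs : Nat.choose (2*m) (2*j+2) * ((2*j+1) * (2*j+2))
          = Nat.choose (2*m) (2*j) * ((2*m - 2*j) * (2*m - (2*j+1))) := by
        calc Nat.choose (2*m) (2*j+2) * ((2*j+1) * (2*j+2))
            = (Nat.choose (2*m) (2*j+2) * (2*j+2)) * (2*j+1) := by ring
          _ = (Nat.choose (2*m) (2*j+1) * (2*m - (2*j+1))) * (2*j+1) := by rw [e2]
          _ = (Nat.choose (2*m) (2*j+1) * (2*j+1)) * (2*m - (2*j+1)) := by ring
          _ = (Nat.choose (2*m) (2*j) * (2*m - 2*j)) * (2*m - (2*j+1)) := by rw [e1]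
          _ = _ := by ring
      rw [lhs]
      calc Nat.choose (2*m) (2*j) * ((2*m - 2*j) * (2*m - (2*j+1)))
          ≤ (Nat.choose m j * (2*m-1)^j) * ((2*m - 2*j) * (2*m - (2*j+1))) := by
            exact Nat.mul_le_mul_right _ ihj
        _ ≤ (Nat.choose m (j+1) * (2*m-1)^(j+1)) * ((2*j+1) * (2*j+2)) := by
            -- (2m-2j) = 2(m-j), (2j+2) = 2(j+1), use e3
            have h2m : 2*m - 2*j = 2 * (m - j) := by omega
            have h22 : 2*j+2 = 2 * (j+1) := by ring
            have hb : 2*m - (2*j+1) ≤ (2*m-1) * (2*j+1) := by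
              have : 2*m - (2*j+1) ≤ 2*m-1 := by omega
              calc 2*m - (2*j+1) ≤ 2*m - 1 := this
                _ ≤ (2*m-1) * (2*j+1) := Nat.le_mul_of_pos_right _ (by omega)
            calc (Nat.choose m j * (2*m-1)^j) * ((2*m - 2*j) * (2*m - (2*j+1)))
                = (Nat.choose m j * (m-j)) * ((2*m-1)^j * 2 * (2*m - (2*j+1))) := by
                  rw [h2m]; ring
              _ = (Nat.choose m (j+1) * (j+1)) * ((2*m-1)^j * 2 * (2*m - (2*j+1))) := by rw [e3]
              _ ≤ (Nat.choose m (j+1) * (j+1)) * ((2*m-1)^j * 2 * ((2*m-1) * (2*j+1))) := by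
                  apply Nat.mul_le_mul_left
                  apply Nat.mul_le_mul_left
                  exact hb
              _ = (Nat.choose m (j+1) * (2*m-1)^(j+1)) * ((2*j+1) * (2 * (j+1))) := by
                  rw [pow_succ]; ring
              _ = (Nat.choose m (j+1) * (2*m-1)^(j+1)) * ((2*j+1) * (2*j+2)) := by rw [h22]
    have hpos : 0 < (2*j+1) * (2*j+2) := by positivity
    exact Nat.le_of_mul_le_mul_right key hpos


lemma holder_pow {ι : Type*} (s : Finset ι) (u v : ι → ℝ) (hu : ∀ x, 0 ≤ u x)
    (hv : ∀ x, 0 ≤ v x) (m j : ℕ) (hj : j ≤ m) :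
    (∑ x ∈ s, u x ^ (m - j) * v x ^ j) ^ m
      ≤ (∑ x ∈ s, u x ^ m) ^ (m - j) * (∑ x ∈ s, v x ^ m) ^ j := by
  rcases Nat.eq_zero_or_pos m with rfl | hm
  · interval_cases j
    simp
  rcases Nat.eq_zero_or_pos j with rfl | hjpos
  · simp
  rcases eq_or_lt_of_le hj with rfl | hjm
  · simp [Nat.sub_self]
  -- now 0 < j < m
  set p : ℝ := (m : ℝ) / ((m : ℝ) - (j : ℝ)) with hp
  set q : ℝ := (m : ℝ) / (j : ℝ) with hq
  have hmj : (0:ℝ) < (m:ℝ) - (j:ℝ) := by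
    have : (j:ℝ) < (m:ℝ) := by exact_mod_cast hjm
    linarith
  have hjR : (0:ℝ) < (j:ℝ) := by exact_mod_cast hjpos
  have hmR : (0:ℝ) < (m:ℝ) := by exact_mod_cast hm
  have hpq : Real.HolderConjugate p q := by
    rw [Real.holderConjugate_iff]
    constructor
    · rw [hp]
      rw [lt_div_iff₀ hmj]
      linarith
    · rw [hp, hq]
      field_simp
      ring
  have key := Real.inner_le_Lp_mul_Lq s
    (fun x => u x ^ (m - j)) (fun x => v x ^ j) hpq
  have habs1 : ∀ x : ι, |u x ^ (m - j)| ^ p = u x ^ m := by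
    intro x
    rw [abs_of_nonneg (pow_nonneg (hu x) _), ← Real.rpow_natCast (u x) (m - j),
      ← Real.rpow_mul (hu x)]
    have : ((m - j : ℕ) : ℝ) * p = (m : ℝ) := by
      have hcast : ((m - j : ℕ) : ℝ) = (m : ℝ) - (j : ℝ) := by
        rw [Nat.cast_sub hj]
      rw [hcast, hp]
      field_simp
    rw [this, Real.rpow_natCast]
  have habs2 : ∀ x : ι, |v x ^ j| ^ q = v x ^ m := by
    intro x
    rw [abs_of_nonneg (pow_nonneg (hv x) _), ← Real.rpow_natCast (v x) j,
      ← Real.rpow_mul (hv x)]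
    have : ((j : ℕ) : ℝ) * q = (m : ℝ) := by
      rw [hq]; field_simp
    rw [this, Real.rpow_natCast]
  simp_rw [habs1, habs2] at key
  -- raise to the m-th power
  have hL : 0 ≤ ∑ x ∈ s, u x ^ (m - j) * v x ^ j :=
    Finset.sum_nonneg fun x _ => mul_nonneg (pow_nonneg (hu x) _) (pow_nonneg (hv x) _)
  have hU : 0 ≤ ∑ x ∈ s, u x ^ m := Finset.sum_nonneg fun x _ => pow_nonneg (hu x) _
  have hV : 0 ≤ ∑ x ∈ s, v x ^ m := Finset.sum_nonneg fun x _ => pow_nonneg (hv x) _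
  have hR : 0 ≤ (∑ x ∈ s, u x ^ m) ^ (1/p) * (∑ x ∈ s, v x ^ m) ^ (1/q) := by
    apply mul_nonneg <;> exact Real.rpow_nonneg (by assumption) _
  calc (∑ x ∈ s, u x ^ (m - j) * v x ^ j) ^ m
      ≤ ((∑ x ∈ s, u x ^ m) ^ (1/p) * (∑ x ∈ s, v x ^ m) ^ (1/q)) ^ m :=
        pow_le_pow_left₀ hL key m
    _ = (∑ x ∈ s, u x ^ m) ^ (m - j) * (∑ x ∈ s, v x ^ m) ^ j := by
        rw [mul_pow, ← Real.rpow_natCast ((∑ x ∈ s, u x ^ m) ^ (1/p)) m,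
          ← Real.rpow_natCast ((∑ x ∈ s, v x ^ m) ^ (1/q)) m,
          ← Real.rpow_mul hU, ← Real.rpow_mul hV]
        have e1 : 1/p * (m:ℝ) = ((m - j : ℕ) : ℝ) := by
          rw [Nat.cast_sub hj, hp]; field_simp
        have e2 : 1/q * (m:ℝ) = ((j : ℕ) : ℝ) := by
          rw [hq]; field_simp
        rw [e1, e2, Real.rpow_natCast, Real.rpow_natCast]

lemma num_choice (r : ℝ) (hr : 1 ≤ r) :
    ∃ m : ℕ, 1 ≤ m ∧
      (m : ℝ) * Real.log (2 * m - 1) + r / 2 ≤ (m : ℝ) + (m : ℝ) * Real.log r := by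
  have hr0 : (0:ℝ) < r := by linarith
  refine ⟨⌈r / 2⌉₊, ?_, ?_⟩
  · rw [Nat.one_le_iff_ne_zero, ← Nat.pos_iff_ne_zero, Nat.ceil_pos]
    linarith
  set m : ℕ := ⌈r / 2⌉₊ with hm
  have hm1 : 1 ≤ m := by
    rw [hm, Nat.one_le_iff_ne_zero, ← Nat.pos_iff_ne_zero, Nat.ceil_pos]
    linarith
  have hmr : r / 2 ≤ (m : ℝ) := Nat.le_ceil _
  have hmr2 : (m : ℝ) < r / 2 + 1 := by
    rw [hm]
    exact Nat.ceil_lt_add_one (by linarith)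
  have hmR : (1:ℝ) ≤ (m:ℝ) := by exact_mod_cast hm1
  have hb : (1:ℝ) ≤ 2 * (m:ℝ) - 1 := by linarith
  rcases le_or_gt (2 * (m:ℝ) - 1) r with hcase | hcase
  · have hlog : Real.log (2 * m - 1) ≤ Real.log r := Real.log_le_log (by linarith) hcase
    have : (m:ℝ) * Real.log (2 * m - 1) ≤ (m:ℝ) * Real.log r :=
      mul_le_mul_of_nonneg_left hlog (by linarith)
    linarith
  · set s : ℝ := 2 * (m:ℝ) - 1 - r with hs
    have hs0 : 0 < s := by rw [hs]; linarith
    have hs1 : s < 1 := by rw [hs]; linarith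
    have hm2 : (2:ℝ) ≤ (m:ℝ) := by
      by_contra h
      push_neg at h
      have : m < 2 := by exact_mod_cast h
      have : m = 1 := by omega
      rw [this] at hcase
      norm_num at hcase
      linarith
    have hr2 : 2 < r := by
      have : 2 * (m:ℝ) - 2 < r := by linarith
      linarith
    have hlog : Real.log (2 * m - 1) ≤ Real.log r + s / r := by
      have h1 : Real.log (2 * m - 1) - Real.log r = Real.log ((2 * m - 1) / r) :=
        (Real.log_div (by linarith) (by linarith)).symm
      have h2 : Real.log ((2 * m - 1) / r) ≤ (2 * m - 1) / r - 1 :=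
        Real.log_le_sub_one_of_pos (by positivity)
      have h3 : (2 * (m:ℝ) - 1) / r - 1 = s / r := by
        rw [hs]; field_simp
      linarith
    have key : (m:ℝ) * (s / r) + r / 2 ≤ (m:ℝ) := by
      have h2m : 2 * (m:ℝ) = r + s + 1 := by rw [hs]; ring
      have hmsr : (m:ℝ) * (s / r) = (m:ℝ) * s / r := by ring
      rw [hmsr, div_add' _ _ _ (by linarith : r ≠ 0), div_le_iff₀ hr0]
      nlinarith
    have : (m:ℝ) * Real.log (2 * m - 1) ≤ (m:ℝ) * (Real.log r + s / r) :=
      mul_le_mul_of_nonneg_left hlog (by linarith)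
    nlinarith [this, key]



lemma chi_insert {n : ℕ} (x : Fin n → Bool) (a : Fin n) (S : Finset (Fin n)) (ha : a ∉ S) :
    chi x (insert a S) = (if x a then (-1:ℝ) else 1) * chi x S := by
  rw [chi, chi, Finset.prod_insert ha]

lemma chi_update {n : ℕ} (x : Fin n → Bool) (a : Fin n) (b : Bool) (S : Finset (Fin n))
    (ha : a ∉ S) : chi (Function.update x a b) S = chi x S := by
  apply Finset.prod_congr rfl
  intro i hi
  have : i ≠ a := fun h => ha (h ▸ hi)
  rw [Function.update_of_ne this]

lemma sum_split {n : ℕ} (a : Fin n) (F : (Fin n → Bool) → ℝ) :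
    ∑ x : Fin n → Bool, F x
      = ∑ x ∈ Finset.univ.filter (fun x => x a = false),
          (F x + F (Function.update x a true)) := by
  rw [Finset.sum_add_distrib,
    ← Finset.sum_filter_add_sum_filter_not Finset.univ (fun x => x a = false) F]
  congr 1
  apply Finset.sum_nbij' (fun x => Function.update x a false)
    (fun x => Function.update x a true)
  · intro x hx
    simp
  · intro x hx
    simp
  · intro x hx
    simp only [Finset.mem_filter, Finset.mem_univ, true_and] at hx
    have hxa : x a = true := (Bool.not_eq_false _).mp hx
    funext i
    rcases eq_or_ne i a with rfl | h
    · simp [hxa]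
    · simp [Function.update_of_ne h]
  · intro x hx
    simp only [Finset.mem_filter, Finset.mem_univ, true_and] at hx
    funext i
    rcases eq_or_ne i a with rfl | h
    · simp [hx]
    · simp [Function.update_of_ne h]
  · intro x hx
    simp only [Finset.mem_filter, Finset.mem_univ, true_and] at hx
    have hxa : x a = true := (Bool.not_eq_false _).mp hx
    have : Function.update (Function.update x a false) a true = x := by
      funext i
      rcases eq_or_ne i a with rfl | h
      · simp [hxa]
      · simp [Function.update_of_ne h]
    rw [this]

lemma sum_indep {n : ℕ} (a : Fin n) (F : (Fin n → Bool) → ℝ)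
    (hF : ∀ y b, F (Function.update y a b) = F y) :
    ∑ x ∈ Finset.univ.filter (fun x => x a = false), F x
      = (∑ x : Fin n → Bool, F x) / 2 := by
  rw [sum_split a F]
  have : ∀ x ∈ Finset.univ.filter (fun x : Fin n → Bool => x a = false),
      F x + F (Function.update x a true) = 2 * F x := by
    intro x _
    rw [hF x true]; ring
  rw [Finset.sum_congr rfl this, ← Finset.mul_sum]
  ring

lemma sum_insert_reindex {n : ℕ} (a : Fin n) (G : Finset (Fin n) → ℝ) :
    ∑ S ∈ Finset.univ.filter (fun S => a ∈ S), G S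
      = ∑ S ∈ Finset.univ.filter (fun S => a ∉ S), G (insert a S) := by
  apply Finset.sum_nbij' (fun S => S.erase a) (fun S => insert a S)
  · intro S hS
    simp
  · intro S hS
    simp only [Finset.mem_filter, Finset.mem_univ, true_and] at hS ⊢
    exact Finset.mem_insert_self a S
  · intro S hS
    simp only [Finset.mem_filter, Finset.mem_univ, true_and] at hS
    exact Finset.insert_erase hS
  · intro S hS
    simp only [Finset.mem_filter, Finset.mem_univ, true_and] at hS
    exact Finset.erase_insert hS
  · intro S hS
    simp only [Finset.mem_filter, Finset.mem_univ, true_and] at hS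
    rw [Finset.insert_erase hS]

lemma hyper_const {n : ℕ} (m k : ℕ) (hm : 1 ≤ m) (c : Finset (Fin n) → ℝ)
    (hc : ∀ S : Finset (Fin n), S ≠ ∅ → c S = 0) :
    ∑ x : Fin n → Bool, (∑ S : Finset (Fin n), c S * chi x S) ^ (2 * m)
      ≤ 2 ^ n * (2 * (m:ℝ) - 1) ^ (k * m) * (∑ S : Finset (Fin n), (c S) ^ 2) ^ m := by
  have hg : ∀ x : Fin n → Bool, ∑ S : Finset (Fin n), c S * chi x S = c ∅ := by
    intro x
    rw [Finset.sum_eq_single ∅]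
    · simp [chi]
    · intro S _ hS
      rw [hc S hS, zero_mul]
    · intro hmem
      exact absurd (Finset.mem_univ _) hmem
  simp_rw [hg]
  rw [Finset.sum_const, Finset.card_univ, card_cube, nsmul_eq_mul]
  have h1 : (c ∅) ^ (2 * m) = ((c ∅) ^ 2) ^ m := by rw [← pow_mul]
  have h2 : (c ∅) ^ 2 ≤ ∑ S : Finset (Fin n), (c S) ^ 2 :=
    Finset.single_le_sum (fun S _ => sq_nonneg (c S)) (Finset.mem_univ ∅)
  have hB1 : (1:ℝ) ≤ 2 * (m:ℝ) - 1 := by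
    have : (1:ℝ) ≤ (m:ℝ) := by exact_mod_cast hm
    linarith
  have hB : (1:ℝ) ≤ (2 * (m:ℝ) - 1) ^ (k * m) := by
    calc (1:ℝ) = 1 ^ (k * m) := (one_pow _).symm
      _ ≤ _ := pow_le_pow_left₀ zero_le_one hB1 _
  push_cast
  calc (2:ℝ)^n * (c ∅) ^ (2*m) = 2^n * (((c ∅)^2)^m * 1) := by rw [← h1]; ring
    _ ≤ 2^n * ((∑ S : Finset (Fin n), (c S) ^ 2) ^ m * (2 * (m:ℝ) - 1) ^ (k * m)) := by
        have hnn : (0:ℝ) ≤ ((c ∅)^2)^m := pow_nonneg (sq_nonneg _) m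
        have h3 : ((c ∅) ^ 2) ^ m ≤ (∑ S : Finset (Fin n), (c S) ^ 2) ^ m :=
          pow_le_pow_left₀ (sq_nonneg _) h2 m
        have := mul_le_mul h3 hB zero_le_one
          (pow_nonneg (Finset.sum_nonneg fun S _ => sq_nonneg _) m)
        have h4 : ((c ∅)^2)^m * 1 ≤ (∑ S : Finset (Fin n), (c S) ^ 2) ^ m *
            (2 * (m:ℝ) - 1) ^ (k * m) := by
          calc ((c ∅)^2)^m * 1 ≤ (∑ S : Finset (Fin n), (c S) ^ 2) ^ m * 1 := by
                exact mul_le_mul_of_nonneg_right h3 zero_le_one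
            _ ≤ _ := by
                exact mul_le_mul_of_nonneg_left hB
                  (pow_nonneg (Finset.sum_nonneg fun S _ => sq_nonneg _) m)
        exact mul_le_mul_of_nonneg_left h4 (by positivity)
    _ = 2 ^ n * (2 * (m:ℝ) - 1) ^ (k * m) * (∑ S : Finset (Fin n), (c S) ^ 2) ^ m := by ring

lemma hyper {n : ℕ} (m : ℕ) (hm : 1 ≤ m) (J : Finset (Fin n)) :
    ∀ (k : ℕ) (c : Finset (Fin n) → ℝ),
      (∀ S, ¬ S ⊆ J → c S = 0) → (∀ S, k < S.card → c S = 0) →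
      ∑ x : Fin n → Bool, (∑ S : Finset (Fin n), c S * chi x S) ^ (2 * m)
        ≤ 2 ^ n * (2 * (m:ℝ) - 1) ^ (k * m) * (∑ S : Finset (Fin n), (c S) ^ 2) ^ m := by
  induction J using Finset.induction_on with
  | empty =>
    intro k c hsupp hdeg
    apply hyper_const m k hm c
    intro S hS
    apply hsupp
    rw [Finset.subset_empty]
    exact hS
  | @insert a J' ha ih =>
    intro k c hsupp hdeg
    rcases Nat.eq_zero_or_pos k with rfl | hk
    · apply hyper_const m 0 hm c
      intro S hS
      exact hdeg S (Finset.card_pos.mpr (Finset.nonempty_iff_ne_empty.mpr hS))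
    obtain ⟨k', rfl⟩ : ∃ k', k = k' + 1 := ⟨k - 1, by omega⟩
    set B : ℝ := 2 * (m:ℝ) - 1 with hB
    have hmR : (1:ℝ) ≤ (m:ℝ) := by exact_mod_cast hm
    have hB1 : (1:ℝ) ≤ B := by rw [hB]; linarith
    have hB0 : (0:ℝ) ≤ B := by linarith
    classical
    set c₀ : Finset (Fin n) → ℝ := fun S => if a ∈ S then 0 else c S with hc₀
    set c₁ : Finset (Fin n) → ℝ := fun S => if a ∈ S then 0 else c (insert a S) with hc₁
    set h : (Fin n → Bool) → ℝ := fun x => ∑ S : Finset (Fin n), c₀ S * chi x S with hh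
    set D : (Fin n → Bool) → ℝ := fun x => ∑ S : Finset (Fin n), c₁ S * chi x S with hD
    set P : ℝ := ∑ S : Finset (Fin n), (c₀ S) ^ 2 with hP
    set Q : ℝ := ∑ S : Finset (Fin n), (c₁ S) ^ 2 with hQ
    have hP0 : 0 ≤ P := Finset.sum_nonneg fun S _ => sq_nonneg _
    have hQ0 : 0 ≤ Q := Finset.sum_nonneg fun S _ => sq_nonneg _
    -- support facts
    have hsupp0 : ∀ S, ¬ S ⊆ J' → c₀ S = 0 := by
      intro S hS
      rw [hc₀]
      by_cases hmem : a ∈ S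
      · simp [hmem]
      · simp only [hmem, if_false]
        apply hsupp
        intro hsub
        apply hS
        intro x hx
        rcases Finset.mem_insert.mp (hsub hx) with rfl | hx'
        · exact absurd hx hmem
        · exact hx'
    have hdeg0 : ∀ S, k' + 1 < S.card → c₀ S = 0 := by
      intro S hS
      rw [hc₀]
      by_cases hmem : a ∈ S
      · simp [hmem]
      · simp only [hmem, if_false]
        exact hdeg S hS
    have hsupp1 : ∀ S, ¬ S ⊆ J' → c₁ S = 0 := by
      intro S hS
      rw [hc₁]
      by_cases hmem : a ∈ S
      · simp [hmem]
      · simp only [hmem, if_false]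
        apply hsupp
        intro hsub
        apply hS
        intro x hx
        have hxi : x ∈ insert a S := Finset.mem_insert_of_mem hx
        rcases Finset.mem_insert.mp (hsub hxi) with rfl | hx'
        · exact absurd hx hmem
        · exact hx'
    have hdeg1 : ∀ S, k' < S.card → c₁ S = 0 := by
      intro S hS
      rw [hc₁]
      by_cases hmem : a ∈ S
      · simp [hmem]
      · simp only [hmem, if_false]
        apply hdeg
        rw [Finset.card_insert_of_notMem hmem]
        omega
    have IH0 : ∑ x : Fin n → Bool, (h x) ^ (2 * m) ≤ 2 ^ n * B ^ ((k' + 1) * m) * P ^ m :=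
      ih (k' + 1) c₀ hsupp0 hdeg0
    have IH1 : ∑ x : Fin n → Bool, (D x) ^ (2 * m) ≤ 2 ^ n * B ^ (k' * m) * Q ^ m :=
      ih k' c₁ hsupp1 hdeg1
    -- independence of coordinate a
    have hupd : ∀ (y : Fin n → Bool) (b : Bool), h (Function.update y a b) = h y := by
      intro y b
      rw [hh]
      apply Finset.sum_congr rfl
      intro S _
      by_cases hmem : a ∈ S
      · simp [hc₀, hmem]
      · rw [chi_update y a b S hmem]
    have hupdD : ∀ (y : Fin n → Bool) (b : Bool), D (Function.update y a b) = D y := by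
      intro y b
      rw [hD]
      apply Finset.sum_congr rfl
      intro S _
      by_cases hmem : a ∈ S
      · simp [hc₁, hmem]
      · rw [chi_update y a b S hmem]
    -- decomposition of g
    have hsplit : ∀ x : Fin n → Bool,
        (∑ S : Finset (Fin n), c S * chi x S)
          = h x + (if x a then (-1:ℝ) else 1) * D x := by
      intro x
      rw [← Finset.sum_filter_add_sum_filter_not Finset.univ (fun S => a ∈ S)
        (fun S => c S * chi x S)]
      have e1 : ∑ S ∈ Finset.univ.filter (fun S => ¬ a ∈ S), c S * chi x S = h x := by
        rw [hh, Finset.sum_filter]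
        apply Finset.sum_congr rfl
        intro S _
        by_cases hmem : a ∈ S <;> simp [hc₀, hmem]
      have e2 : ∑ S ∈ Finset.univ.filter (fun S => a ∈ S), c S * chi x S
          = (if x a then (-1:ℝ) else 1) * D x := by
        rw [sum_insert_reindex a (fun S => c S * chi x S)]
        have : ∀ S ∈ Finset.univ.filter (fun S : Finset (Fin n) => a ∉ S),
            c (insert a S) * chi x (insert a S)
              = (if x a then (-1:ℝ) else 1) * (c₁ S * chi x S) := by
          intro S hS
          simp only [Finset.mem_filter, Finset.mem_univ, true_and] at hS
          rw [chi_insert x a S hS, hc₁]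
          simp only [hS, if_false]
          ring
        rw [Finset.sum_congr rfl this, ← Finset.mul_sum, hD, Finset.sum_filter]
        congr 1
        apply Finset.sum_congr rfl
        intro S _
        by_cases hmem : a ∈ S <;> simp [hc₁, hmem]
      rw [e1, e2]
      ring
    -- decomposition of the sum of squares
    have hsq : (∑ S : Finset (Fin n), (c S) ^ 2) = P + Q := by
      rw [← Finset.sum_filter_add_sum_filter_not Finset.univ (fun S => a ∈ S)
        (fun S => (c S) ^ 2)]
      have e1 : ∑ S ∈ Finset.univ.filter (fun S => ¬ a ∈ S), (c S) ^ 2 = P := by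
        rw [hP, Finset.sum_filter]
        apply Finset.sum_congr rfl
        intro S _
        by_cases hmem : a ∈ S <;> simp [hc₀, hmem]
      have e2 : ∑ S ∈ Finset.univ.filter (fun S => a ∈ S), (c S) ^ 2 = Q := by
        rw [sum_insert_reindex a (fun S => (c S) ^ 2), hQ, Finset.sum_filter]
        apply Finset.sum_congr rfl
        intro S _
        by_cases hmem : a ∈ S <;> simp [hc₁, hmem]
      rw [e1, e2]
      ring
    -- rewrite the main sum using the doubling identity
    have hmain : ∑ x : Fin n → Bool, (∑ S : Finset (Fin n), c S * chi x S) ^ (2 * m)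
        = ∑ x ∈ Finset.univ.filter (fun x : Fin n → Bool => x a = false),
            ((h x + D x) ^ (2*m) + (h x - D x) ^ (2*m)) := by
      rw [sum_split a (fun x => (∑ S : Finset (Fin n), c S * chi x S) ^ (2 * m))]
      apply Finset.sum_congr rfl
      intro x hx
      simp only [Finset.mem_filter, Finset.mem_univ, true_and] at hx
      congr 1
      · rw [hsplit x, hx]
        simp
      · rw [hsplit (Function.update x a true), Function.update_self,
          hupd x true, hupdD x true]
        simp
        ring
    rw [hmain]
    -- apply the even binomial identity pointwise
    have hbin : ∀ x : Fin n → Bool,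
        (h x + D x) ^ (2*m) + (h x - D x) ^ (2*m)
          = 2 * ∑ j ∈ Finset.range (m + 1),
              (Nat.choose (2 * m) (2 * j) : ℝ) * (D x) ^ (2 * j) * (h x) ^ (2 * m - 2 * j) :=
      fun x => even_binomial (D x) (h x) m
    rw [Finset.sum_congr rfl (fun x _ => hbin x)]
    rw [← Finset.mul_sum, Finset.sum_comm]
    -- the j-th Hölder term
    set Xf := Finset.univ.filter (fun x : Fin n → Bool => x a = false) with hXf
    have hterm : ∀ j ∈ Finset.range (m + 1),
        ∑ x ∈ Xf, (Nat.choose (2 * m) (2 * j) : ℝ) * (D x) ^ (2 * j) * (h x) ^ (2 * m - 2 * j)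
          = (Nat.choose (2 * m) (2 * j) : ℝ) *
            ∑ x ∈ Xf, ((h x)^2) ^ (m - j) * ((D x)^2) ^ j := by
      intro j hj
      rw [Finset.mem_range] at hj
      have hjm : j ≤ m := by omega
      rw [Finset.mul_sum]
      apply Finset.sum_congr rfl
      intro x _
      have h2j : (D x) ^ (2 * j) = ((D x)^2) ^ j := by rw [← pow_mul]
      have h2mj : (h x) ^ (2 * m - 2 * j) = ((h x)^2) ^ (m - j) := by
        rw [← pow_mul]
        congr 1
        omega
      rw [h2j, h2mj]
      ring
    rw [Finset.sum_congr rfl hterm]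
    -- bound each Hölder term
    have hHf : ∑ x ∈ Xf, ((h x)^2) ^ m = (∑ x : Fin n → Bool, (h x) ^ (2*m)) / 2 := by
      have : ∀ x : Fin n → Bool, ((h x)^2) ^ m = (h x) ^ (2*m) := by
        intro x; rw [← pow_mul]
      rw [Finset.sum_congr rfl (fun x _ => this x), hXf]
      apply sum_indep
      intro y b
      rw [hupd y b]
    have hEf : ∑ x ∈ Xf, ((D x)^2) ^ m = (∑ x : Fin n → Bool, (D x) ^ (2*m)) / 2 := by
      have : ∀ x : Fin n → Bool, ((D x)^2) ^ m = (D x) ^ (2*m) := by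
        intro x; rw [← pow_mul]
      rw [Finset.sum_congr rfl (fun x _ => this x), hXf]
      apply sum_indep
      intro y b
      rw [hupdD y b]
    set RH : ℝ := 2 ^ n * B ^ ((k' + 1) * m) * P ^ m / 2 with hRH
    set RE : ℝ := 2 ^ n * B ^ (k' * m) * Q ^ m / 2 with hRE
    have h2n : (0:ℝ) ≤ 2 ^ n := by positivity
    have hRH0 : 0 ≤ RH := by
      rw [hRH]
      exact div_nonneg (mul_nonneg (mul_nonneg h2n (pow_nonneg hB0 _)) (pow_nonneg hP0 _))
        (by norm_num)
    have hRE0 : 0 ≤ RE := by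
      rw [hRE]
      exact div_nonneg (mul_nonneg (mul_nonneg h2n (pow_nonneg hB0 _)) (pow_nonneg hQ0 _))
        (by norm_num)
    have hHfb : ∑ x ∈ Xf, ((h x)^2) ^ m ≤ RH := by
      rw [hHf, hRH]
      linarith [IH0]
    have hEfb : ∑ x ∈ Xf, ((D x)^2) ^ m ≤ RE := by
      rw [hEf, hRE]
      linarith [IH1]
    have hTj : ∀ j ∈ Finset.range (m+1),
        ∑ x ∈ Xf, ((h x)^2) ^ (m - j) * ((D x)^2) ^ j
          ≤ 2 ^ n / 2 * B ^ (k' * m) * (B ^ (m - j) * P ^ (m - j) * Q ^ j) := by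
      intro j hj
      rw [Finset.mem_range] at hj
      have hjm : j ≤ m := by omega
      set T : ℝ := ∑ x ∈ Xf, ((h x)^2) ^ (m - j) * ((D x)^2) ^ j with hT
      set Z : ℝ := 2 ^ n / 2 * B ^ (k' * m) * (B ^ (m - j) * P ^ (m - j) * Q ^ j) with hZ
      have hT0 : 0 ≤ T := Finset.sum_nonneg fun x _ =>
        mul_nonneg (pow_nonneg (sq_nonneg _) _) (pow_nonneg (sq_nonneg _) _)
      have hZ0 : 0 ≤ Z := by
        rw [hZ]
        exact mul_nonneg (mul_nonneg (by positivity : (0:ℝ) ≤ 2^n/2) (pow_nonneg hB0 _))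
          (mul_nonneg (mul_nonneg (pow_nonneg hB0 _) (pow_nonneg hP0 _)) (pow_nonneg hQ0 _))
      have hTm : T ^ m ≤ RH ^ (m - j) * RE ^ j := by
        calc T ^ m ≤ (∑ x ∈ Xf, ((h x)^2) ^ m) ^ (m - j) * (∑ x ∈ Xf, ((D x)^2) ^ m) ^ j := by
              apply holder_pow Xf (fun x => (h x)^2) (fun x => (D x)^2)
                (fun x => sq_nonneg _) (fun x => sq_nonneg _) m j hjm
          _ ≤ RH ^ (m - j) * RE ^ j := by
              apply mul_le_mul
              · exact pow_le_pow_left₀ (Finset.sum_nonneg fun x _ =>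
                  pow_nonneg (sq_nonneg _) _) hHfb _
              · exact pow_le_pow_left₀ (Finset.sum_nonneg fun x _ =>
                  pow_nonneg (sq_nonneg _) _) hEfb _
              · exact pow_nonneg (Finset.sum_nonneg fun x _ =>
                  pow_nonneg (sq_nonneg _) _) _
              · exact pow_nonneg hRH0 _
      have hZm : Z ^ m = RH ^ (m - j) * RE ^ j := by
        rw [hZ, hRH, hRE]
        obtain ⟨d, hd⟩ : ∃ d, m = d + j := ⟨m - j, by omega⟩
        have hmd : m - j = d := by omega
        rw [hmd, hd]
        ring
      have hTZm : T ^ m ≤ Z ^ m := by rw [hZm]; exact hTm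
      exact le_of_pow_le_pow_left₀ (show m ≠ 0 by omega) hZ0 hTZm
    -- combine everything
    have hchoose : ∀ j ∈ Finset.range (m+1),
        ((Nat.choose (2*m) (2*j) : ℝ)) ≤ (Nat.choose m j : ℝ) * B ^ j := by
      intro j hj
      rw [Finset.mem_range] at hj
      have hjm : j ≤ m := by omega
      have := choose_le m j hjm
      have hcast : ((Nat.choose m j * (2 * m - 1) ^ j : ℕ) : ℝ)
          = (Nat.choose m j : ℝ) * B ^ j := by
        push_cast [Nat.cast_sub (by omega : 1 ≤ 2 * m)]
        rw [hB]
      calc ((Nat.choose (2*m) (2*j) : ℝ)) ≤ ((Nat.choose m j * (2 * m - 1) ^ j : ℕ) : ℝ) := by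
            exact_mod_cast this
        _ = (Nat.choose m j : ℝ) * B ^ j := hcast
    have hsum : ∑ j ∈ Finset.range (m+1),
        (Nat.choose (2 * m) (2 * j) : ℝ) * ∑ x ∈ Xf, ((h x)^2) ^ (m - j) * ((D x)^2) ^ j
          ≤ ∑ j ∈ Finset.range (m+1), ((Nat.choose m j : ℝ) * B ^ j) *
              (2 ^ n / 2 * B ^ (k' * m) * (B ^ (m - j) * P ^ (m - j) * Q ^ j)) := by
      apply Finset.sum_le_sum
      intro j hj
      have hT0 : 0 ≤ ∑ x ∈ Xf, ((h x)^2) ^ (m - j) * ((D x)^2) ^ j :=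
        Finset.sum_nonneg fun x _ =>
          mul_nonneg (pow_nonneg (sq_nonneg _) _) (pow_nonneg (sq_nonneg _) _)
      have hZ0 : (0:ℝ) ≤ 2 ^ n / 2 * B ^ (k' * m) * (B ^ (m - j) * P ^ (m - j) * Q ^ j) :=
        mul_nonneg (mul_nonneg (by positivity : (0:ℝ) ≤ 2^n/2) (pow_nonneg hB0 _))
          (mul_nonneg (mul_nonneg (pow_nonneg hB0 _) (pow_nonneg hP0 _)) (pow_nonneg hQ0 _))
      exact mul_le_mul (hchoose j hj) (hTj j hj) hT0
        (mul_nonneg (Nat.cast_nonneg _) (pow_nonneg hB0 _))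
    have hfinal : ∑ j ∈ Finset.range (m+1), ((Nat.choose m j : ℝ) * B ^ j) *
        (2 ^ n / 2 * B ^ (k' * m) * (B ^ (m - j) * P ^ (m - j) * Q ^ j))
          = 2 ^ n / 2 * B ^ ((k'+1) * m) * (Q + P) ^ m := by
      rw [add_pow, Finset.mul_sum]
      apply Finset.sum_congr rfl
      intro j hj
      rw [Finset.mem_range] at hj
      obtain ⟨d, hd⟩ : ∃ d, m = d + j := ⟨m - j, by omega⟩
      have hmd : m - j = d := by omega
      rw [hmd, hd]
      ring
    calc 2 * ∑ j ∈ Finset.range (m+1),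
          (Nat.choose (2 * m) (2 * j) : ℝ) * ∑ x ∈ Xf, ((h x)^2) ^ (m - j) * ((D x)^2) ^ j
        ≤ 2 * (2 ^ n / 2 * B ^ ((k'+1) * m) * (Q + P) ^ m) := by
          rw [← hfinal]
          linarith [hsum]
      _ = 2 ^ n * B ^ ((k'+1) * m) * (∑ S : Finset (Fin n), (c S) ^ 2) ^ m := by
          rw [hsq]
          have : Q + P = P + Q := by ring
          rw [this]
          ring

lemma coeff_eq {n : ℕ} (f : (Fin n → Bool) → ℝ) (S : Finset (Fin n)) :
    (2:ℝ) ^ n * booleanFourierCoeff f S = ∑ x : Fin n → Bool, f x * chi x S := by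
  simp only [booleanFourierCoeff, chi]
  field_simp

/-- level-`k` inequalities: Let `A ⊆ {-1,1}^n` be nonempty
with density `α = |A|/2^n` and `k ≤ 2 ln(1/α)`.  Then
`∑_{|S|=k} (1̂_A(S))² ≤ α² ((2e/k) ln(1/α))^k`. -/
theorem level_k_inequality
    {n : ℕ} (A : Finset (Fin n → Bool)) (hA : A.Nonempty) (k : ℕ)
    (α : ℝ) (hα : α = (A.card : ℝ) / 2 ^ n)
    (hk : (k : ℝ) ≤ 2 * Real.log (1 / α)) :
    (∑ S ∈ Finset.univ.filter (fun S : Finset (Fin n) => S.card = k),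
        (booleanFourierCoeff (fun x => if x ∈ A then (1 : ℝ) else 0) S) ^ 2)
      ≤ α ^ 2 * ((2 * Real.exp 1 / k) * Real.log (1 / α)) ^ k := by
  classical
  set f : (Fin n → Bool) → ℝ := fun x => if x ∈ A then (1 : ℝ) else 0 with hf
  have h2n : (0:ℝ) < 2 ^ n := by positivity
  have hcard : 0 < A.card := Finset.card_pos.mpr hA
  have hα0 : 0 < α := by
    rw [hα]
    positivity
  have hα1 : α ≤ 1 := by
    rw [hα, div_le_one h2n]
    have := Finset.card_le_univ A
    calc (A.card : ℝ) ≤ ((Finset.univ : Finset (Fin n → Bool)).card : ℝ) := by exact_mod_cast this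
      _ = 2 ^ n := by rw [Finset.card_univ, card_cube]; push_cast; ring
  have ht0 : 0 ≤ Real.log (1 / α) := by
    apply Real.log_nonneg
    rw [le_div_iff₀ hα0]
    linarith
  -- the case k = 0
  rcases Nat.eq_zero_or_pos k with rfl | hkpos
  · have hfilter : Finset.univ.filter (fun S : Finset (Fin n) => S.card = 0) = {∅} := by
      ext S
      simp [Finset.card_eq_zero]
    rw [hfilter, Finset.sum_singleton]
    have hcoeff : booleanFourierCoeff f ∅ = α := by
      rw [booleanFourierCoeff, hα]
      congr 1
      simp only [Finset.prod_empty, mul_one, hf]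
      rw [Finset.sum_ite_mem, Finset.univ_inter, Finset.sum_const, nsmul_eq_mul, mul_one]
    rw [hcoeff]
    simp
  -- now k ≥ 1
  set t : ℝ := Real.log (1 / α) with htdef
  have htpos : 0 < t := by
    have : (1:ℝ) ≤ (k:ℝ) := by exact_mod_cast hkpos
    rw [htdef]; linarith
  set r : ℝ := 2 * t / k with hrdef
  have hkR : (1:ℝ) ≤ (k:ℝ) := by exact_mod_cast hkpos
  have hkR0 : (0:ℝ) < (k:ℝ) := by linarith
  have hr1 : 1 ≤ r := by
    rw [hrdef, le_div_iff₀ hkR0, one_mul]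
    exact hk
  have hr0 : 0 < r := by linarith
  obtain ⟨m, hm1, hnum⟩ := num_choice r hr1
  set B : ℝ := 2 * (m:ℝ) - 1 with hB
  have hmR : (1:ℝ) ≤ (m:ℝ) := by exact_mod_cast hm1
  have hB1 : (1:ℝ) ≤ B := by rw [hB]; linarith
  have hB0 : (0:ℝ) < B := by linarith
  -- level-k coefficients
  set d : Finset (Fin n) → ℝ :=
    fun S => if S.card = k then booleanFourierCoeff f S else 0 with hd
  set g : (Fin n → Bool) → ℝ := fun x => ∑ S : Finset (Fin n), d S * chi x S with hg
  set L : ℝ := ∑ S : Finset (Fin n), (d S) ^ 2 with hL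
  have hL0 : 0 ≤ L := Finset.sum_nonneg fun S _ => sq_nonneg _
  have hLHS : (∑ S ∈ Finset.univ.filter (fun S : Finset (Fin n) => S.card = k),
      (booleanFourierCoeff f S) ^ 2) = L := by
    rw [hL, Finset.sum_filter]
    apply Finset.sum_congr rfl
    intro S _
    by_cases hS : S.card = k <;> simp [hd, hS]
  rw [hLHS]
  -- the right-hand side base
  have hbase : (2 * Real.exp 1 / k) * t = Real.exp 1 * r := by
    rw [hrdef]
    field_simp
  rw [hbase]
  set Y : ℝ := α ^ 2 * (Real.exp 1 * r) ^ k with hY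
  have her : 0 < Real.exp 1 * r := mul_pos (Real.exp_pos 1) hr0
  have hY0 : 0 ≤ Y := by rw [hY]; positivity
  rcases eq_or_lt_of_le hL0 with hLzero | hLpos
  · rw [← hLzero]; exact hY0
  -- hypercontractivity for g
  have hgnn : ∀ x : Fin n → Bool, 0 ≤ g x ^ (2 * m) := by
    intro x
    rw [pow_mul]
    exact pow_nonneg (sq_nonneg _) m
  have hdsupp : ∀ S : Finset (Fin n), k < S.card → d S = 0 := by
    intro S hS
    rw [hd]
    simp only [ite_eq_right_iff]
    intro hSk
    omega
  have hdJ : ∀ S : Finset (Fin n), ¬ S ⊆ Finset.univ → d S = 0 := by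
    intro S hS
    exact absurd (Finset.subset_univ S) hS
  have hhyper : ∑ x : Fin n → Bool, (g x) ^ (2 * m) ≤ 2 ^ n * B ^ (k * m) * L ^ m :=
    hyper m hm1 Finset.univ k d hdJ hdsupp
  -- correlation identity : ∑ f·g = 2^n L
  have hcorr : ∑ x : Fin n → Bool, f x * g x = 2 ^ n * L := by
    have swap : ∑ x : Fin n → Bool, f x * g x
        = ∑ S : Finset (Fin n), ∑ x : Fin n → Bool, d S * (f x * chi x S) := by
      rw [← Finset.sum_comm]
      apply Finset.sum_congr rfl
      intro x _
      rw [hg, Finset.mul_sum]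
      apply Finset.sum_congr rfl
      intro S _
      ring
    rw [swap]
    have hterm : ∀ S : Finset (Fin n),
        ∑ x : Fin n → Bool, d S * (f x * chi x S) = 2 ^ n * (d S) ^ 2 := by
      intro S
      rw [← Finset.mul_sum, ← coeff_eq]
      by_cases hS : S.card = k <;> simp [hd, hS] <;> ring
    rw [Finset.sum_congr rfl (fun S _ => hterm S), ← Finset.mul_sum, hL]
  -- restriction to A and power mean
  have hfg : ∑ x : Fin n → Bool, f x * g x = ∑ x ∈ A, g x := by
    have : ∀ x : Fin n → Bool, f x * g x = if x ∈ A then g x else 0 := by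
      intro x
      rw [hf]
      by_cases hx : x ∈ A <;> simp [hx]
    rw [Finset.sum_congr rfl (fun x _ => this x), Finset.sum_ite_mem, Finset.univ_inter]
  have habs : ∑ x ∈ A, g x ≤ ∑ x ∈ A, |g x| :=
    Finset.sum_le_sum fun x _ => le_abs_self _
  have habsnn : 0 ≤ ∑ x ∈ A, |g x| := Finset.sum_nonneg fun x _ => abs_nonneg _
  have hpm : (∑ x ∈ A, |g x|) ^ (2 * m)
      ≤ (A.card : ℝ) ^ (2 * m - 1) * ∑ x ∈ A, |g x| ^ (2 * m) := by
    have hpow := pow_sum_div_card_le_sum_pow (f := fun x => |g x|) (s := A)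
      (fun i _ => abs_nonneg _) (2 * m - 1)
    have h2m : 2 * m - 1 + 1 = 2 * m := by omega
    rw [h2m] at hpow
    rw [div_le_iff₀ (by positivity : (0:ℝ) < (A.card:ℝ) ^ (2*m-1))] at hpow
    calc (∑ x ∈ A, |g x|) ^ (2 * m)
        ≤ (∑ x ∈ A, |g x| ^ (2*m)) * (A.card:ℝ) ^ (2*m-1) := hpow
      _ = (A.card : ℝ) ^ (2 * m - 1) * ∑ x ∈ A, |g x| ^ (2 * m) := by ring
  have habs2 : ∑ x ∈ A, |g x| ^ (2 * m) = ∑ x ∈ A, g x ^ (2 * m) := by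
    apply Finset.sum_congr rfl
    intro x _
    rw [pow_abs, abs_of_nonneg (hgnn x)]
  have hsub : ∑ x ∈ A, g x ^ (2 * m) ≤ ∑ x : Fin n → Bool, g x ^ (2 * m) :=
    Finset.sum_le_sum_of_subset_of_nonneg (Finset.subset_univ A)
      (fun x _ _ => hgnn x)
  -- main chain
  have hcardα : (A.card : ℝ) = α * 2 ^ n := by
    rw [hα]
    field_simp
  have step1 : ((2:ℝ) ^ n * L) ^ (2 * m)
      ≤ (α * 2 ^ n) ^ (2 * m - 1) * (2 ^ n * B ^ (k * m) * L ^ m) := by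
    calc ((2:ℝ) ^ n * L) ^ (2 * m) ≤ (∑ x ∈ A, |g x|) ^ (2 * m) := by
          apply pow_le_pow_left₀ (by positivity)
          rw [← hcorr, hfg]
          exact habs
      _ ≤ (A.card : ℝ) ^ (2 * m - 1) * ∑ x ∈ A, |g x| ^ (2 * m) := hpm
      _ = (A.card : ℝ) ^ (2 * m - 1) * ∑ x ∈ A, g x ^ (2 * m) := by rw [habs2]
      _ ≤ (A.card : ℝ) ^ (2 * m - 1) * ∑ x : Fin n → Bool, g x ^ (2 * m) := by
          apply mul_le_mul_of_nonneg_left hsub (pow_nonneg (Nat.cast_nonneg _) _)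
      _ ≤ (A.card : ℝ) ^ (2 * m - 1) * (2 ^ n * B ^ (k * m) * L ^ m) := by
          apply mul_le_mul_of_nonneg_left hhyper (pow_nonneg (Nat.cast_nonneg _) _)
      _ = (α * 2 ^ n) ^ (2 * m - 1) * (2 ^ n * B ^ (k * m) * L ^ m) := by rw [hcardα]
  have hE : (0:ℝ) < ((2:ℝ) ^ n) ^ (2 * m) := by positivity
  have step2 : L ^ (2 * m) ≤ α ^ (2 * m - 1) * B ^ (k * m) * L ^ m := by
    have h1 : ((2:ℝ) ^ n * L) ^ (2 * m) = ((2:ℝ) ^ n) ^ (2 * m) * L ^ (2 * m) := by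
      rw [mul_pow]
    have hps : ((2:ℝ) ^ n) ^ (2 * m - 1) * 2 ^ n = ((2:ℝ) ^ n) ^ (2 * m) := by
      rw [← pow_succ]
      congr 1
      omega
    have h2 : (α * 2 ^ n) ^ (2 * m - 1) * ((2:ℝ) ^ n * B ^ (k * m) * L ^ m)
        = ((2:ℝ) ^ n) ^ (2 * m) * (α ^ (2 * m - 1) * B ^ (k * m) * L ^ m) := by
      rw [mul_pow, ← hps]
      ring
    rw [h1, h2] at step1
    exact le_of_mul_le_mul_left step1 hE
  have step3 : L ^ m ≤ α ^ (2 * m - 1) * B ^ (k * m) := by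
    have h1 : L ^ (2 * m) = L ^ m * L ^ m := by
      rw [← pow_add]
      congr 1
      omega
    rw [h1] at step2
    have hLm : 0 < L ^ m := pow_pos hLpos m
    exact le_of_mul_le_mul_right step2 hLm
  -- numeric comparison
  have htkr : t = (k:ℝ) * r / 2 := by
    rw [hrdef]
    field_simp
  have hlog : Real.log (Real.exp 1 * r) = 1 + Real.log r := by
    rw [Real.log_mul (Real.exp_ne_zero 1) (ne_of_gt hr0), Real.log_exp]
  have hαexp : α = Real.exp (-t) := by
    rw [htdef, one_div, Real.log_inv]
    rw [neg_neg, Real.exp_log hα0]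
  have hnumk : (k:ℝ)*(m:ℝ)*Real.log B + (k:ℝ)*r/2
      ≤ (k:ℝ)*(m:ℝ) + (k:ℝ)*(m:ℝ)*Real.log r := by
    have hmul := mul_le_mul_of_nonneg_left hnum (le_of_lt hkR0)
    have e1 : (k:ℝ)*((m:ℝ)*Real.log (2*(m:ℝ)-1) + r/2)
        = (k:ℝ)*(m:ℝ)*Real.log (2*(m:ℝ)-1) + (k:ℝ)*r/2 := by ring
    have e2 : (k:ℝ)*((m:ℝ) + (m:ℝ)*Real.log r)
        = (k:ℝ)*(m:ℝ) + (k:ℝ)*(m:ℝ)*Real.log r := by ring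
    rw [e1, e2] at hmul
    rw [hB]
    exact hmul
  have hBle : B ^ (k * m) ≤ α * (Real.exp 1 * r) ^ (k * m) := by
    have e1 : B ^ (k * m) = Real.exp ((k * m : ℕ) * Real.log B) := by
      rw [Real.exp_nat_mul, Real.exp_log hB0]
    have e2 : (Real.exp 1 * r) ^ (k * m) = Real.exp ((k * m : ℕ) * (1 + Real.log r)) := by
      rw [Real.exp_nat_mul, ← hlog, Real.exp_log her]
    rw [e1, e2, hαexp, ← Real.exp_add]
    apply Real.exp_le_exp.mpr
    have hcast : ((k * m : ℕ) : ℝ) = (k:ℝ) * (m:ℝ) := by push_cast; ring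
    rw [hcast]
    have e3 : (k:ℝ)*(m:ℝ)*(1+Real.log r) = (k:ℝ)*(m:ℝ) + (k:ℝ)*(m:ℝ)*Real.log r := by ring
    rw [e3, htkr]
    linarith [hnumk]
  have step4 : L ^ m ≤ Y ^ m := by
    have hYm : Y ^ m = α ^ (2 * m) * (Real.exp 1 * r) ^ (k * m) := by
      rw [hY, mul_pow, ← pow_mul, ← pow_mul]
    have : α ^ (2 * m - 1) * B ^ (k * m) ≤ α ^ (2 * m) * (Real.exp 1 * r) ^ (k * m) := by
      calc α ^ (2 * m - 1) * B ^ (k * m)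
          ≤ α ^ (2 * m - 1) * (α * (Real.exp 1 * r) ^ (k * m)) := by
            apply mul_le_mul_of_nonneg_left hBle (by positivity)
        _ = (α ^ (2 * m - 1) * α) * (Real.exp 1 * r) ^ (k * m) := by ring
        _ = α ^ (2 * m) * (Real.exp 1 * r) ^ (k * m) := by
            rw [← pow_succ]
            congr 2
            omega
    rw [hYm]
    exact le_trans step3 this
  exact le_of_pow_le_pow_left₀ (by omega) hY0 step4
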